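/- Let ν > 0, g > 0, ν' = √(2ν), and define for c ∈ ℝ the energy E(c) = ν log(2/√(2πν)) − ν( f(c/ν') + (1/4) f'(c/ν')² ) + g( √(ν/2) f'(c/ν') + ν' (c/ν') ), where f(t) = log(1 + erf(t)). Then E has a unique critical point on ℝ, and it is a global minimum of E. -/

import Mathlib

open Real MeasureTheory

/-- The error function `erf x = (2/√π) ∫₀ˣ exp(−t²) dt`. -/
noncomputable def erf (x : ℝ) : ℝ := (2 / Real.sqrt Real.pi) * ∫ t in (0:ℝ)..x, Real.exp (-t^2)

/-- `f(t) = log(1 + erf t)`. -/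
noncomputable def fErf (t : ℝ) : ℝ := Real.log (1 + erf t)

/-- `f'(t) = (2/√π) exp(−t²)/(1 + erf t)`. -/
noncomputable def fErf' (t : ℝ) : ℝ := (2 / Real.sqrt Real.pi) * Real.exp (-t^2) / (1 + erf t)

/-- The reduced energy on the family of truncated Gaussians,
`E(c) = ν log(2/√(2πν)) − ν(f(t) + (1/4)f'(t)²) + g(√(ν/2) f'(t) + √(2ν) t)`,
with `t = c/√(2ν)`. -/
noncomputable def Eenergy (ν g c : ℝ) : ℝ :=
  ν * Real.log (2 / Real.sqrt (2 * Real.pi * ν))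
    - ν * (fErf (c / Real.sqrt (2 * ν)) + (1/4) * (fErf' (c / Real.sqrt (2 * ν))) ^ 2)
    + g * (Real.sqrt (ν / 2) * fErf' (c / Real.sqrt (2 * ν))
        + Real.sqrt (2 * ν) * (c / Real.sqrt (2 * ν)))

open Set Filter

noncomputable def Fg (t : ℝ) : ℝ := ∫ s in Set.Iic t, Real.exp (-s^2)

lemma gauss_cont : Continuous (fun s : ℝ => Real.exp (-s^2)) := by fun_prop

lemma gauss_integrable : Integrable (fun s : ℝ => Real.exp (-s^2)) := by
  have := integrable_exp_neg_mul_sq (b := 1) one_pos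
  simpa using this

lemma Fg_eq (u : ℝ) : Fg u = Fg 0 + ∫ x in (0:ℝ)..u, Real.exp (-x^2) := by
  have := intervalIntegral.integral_Iic_sub_Iic (f := fun s : ℝ => Real.exp (-s^2))
    (μ := volume) (a := (0:ℝ)) (b := u) gauss_integrable.integrableOn gauss_integrable.integrableOn
  unfold Fg; linarith [this]

lemma hasDerivAt_Fg (t : ℝ) : HasDerivAt Fg (Real.exp (-t^2)) t := by
  have h : HasDerivAt (fun u => ∫ x in (0:ℝ)..u, Real.exp (-x^2)) (Real.exp (-t^2)) t :=
    intervalIntegral.integral_hasDerivAt_right (gauss_integrable.intervalIntegrable)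
      (gauss_cont.stronglyMeasurable.stronglyMeasurableAtFilter) gauss_cont.continuousAt
  have := (h.const_add (Fg 0))
  apply this.congr_of_eventuallyEq
  filter_upwards with u using (Fg_eq u)

lemma Fg_strictMono : StrictMono Fg :=
  strictMono_of_deriv_pos (fun t => by rw [(hasDerivAt_Fg t).deriv]; positivity)

lemma Fg_tendsto_atBot : Tendsto Fg atBot (nhds 0) := by
  have h : Tendsto (fun t => ∫ x in t..(0:ℝ), Real.exp (-x^2)) atBot
      (nhds (∫ x in Iic (0:ℝ), Real.exp (-x^2))) :=
    intervalIntegral_tendsto_integral_Iic 0 gauss_integrable.integrableOn tendsto_id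
  have h2 : Tendsto (fun t => Fg 0 - ∫ x in t..(0:ℝ), Real.exp (-x^2)) atBot (nhds (Fg 0 - Fg 0)) :=
    (tendsto_const_nhds.sub h)
  rw [sub_self] at h2
  apply h2.congr
  intro t
  rw [Fg_eq t, intervalIntegral.integral_symm]
  ring

lemma pos_of_strictMono_tendsto {h : ℝ → ℝ} (hm : StrictMono h)
    (hl : Tendsto h atBot (nhds 0)) (t : ℝ) : 0 < h t := by
  have h1 : 0 ≤ h (t - 1) := by
    apply le_of_tendsto hl
    filter_upwards [eventually_le_atBot (t - 1)] with s hs using hm.monotone hs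
  exact lt_of_le_of_lt h1 (hm (by linarith))

lemma Fg_pos (t : ℝ) : 0 < Fg t := pos_of_strictMono_tendsto Fg_strictMono Fg_tendsto_atBot t

lemma Fg_le_exp {t : ℝ} (ht : t ≤ -1) : Fg t ≤ Real.exp t := by
  rw [← integral_exp_Iic t]
  apply setIntegral_mono_on gauss_integrable.integrableOn (integrableOn_exp_Iic t)
    measurableSet_Iic
  intro s hs
  simp only [mem_Iic] at hs
  apply Real.exp_le_exp.2
  nlinarith

lemma sq_tendsto_atBot : Tendsto (fun t : ℝ => t^2) atBot atTop := by
  have h : Tendsto (fun x : ℝ => x ^ 2) atTop atTop := tendsto_pow_atTop (by norm_num)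
  have := h.comp tendsto_neg_atBot_atTop
  apply this.congr
  intro t
  show (-t) ^ 2 = t ^ 2
  ring

lemma gaussval_tendsto_atBot : Tendsto (fun t : ℝ => Real.exp (-t^2)) atBot (nhds 0) := by
  apply Real.tendsto_exp_atBot.comp
  exact (tendsto_neg_atTop_atBot).comp sq_tendsto_atBot

lemma gaussval_tendsto_atTop : Tendsto (fun t : ℝ => Real.exp (-t^2)) atTop (nhds 0) := by
  apply Real.tendsto_exp_atBot.comp
  exact (tendsto_neg_atTop_atBot).comp (tendsto_pow_atTop (n := 2) (by norm_num))

lemma mul_exp_tendsto_atBot : Tendsto (fun t : ℝ => t * Real.exp t) atBot (nhds 0) := by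
  have h := (tendsto_pow_mul_exp_neg_atTop_nhds_zero 1).comp tendsto_neg_atBot_atTop
  have h2 : Tendsto (fun t : ℝ => -(t * Real.exp t)) atBot (nhds 0) := by
    apply h.congr; intro t
    show (-t) ^ 1 * Real.exp (-(-t)) = -(t * Real.exp t)
    rw [neg_neg, pow_one]; ring
  simpa using h2.neg

lemma mul_Fg_tendsto_atBot : Tendsto (fun t : ℝ => t * Fg t) atBot (nhds 0) := by
  apply squeeze_zero_norm' (a := fun t : ℝ => -(t * Real.exp t))
  · filter_upwards [eventually_le_atBot (-1 : ℝ)] with t ht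
    have h1 := Fg_pos t
    have h2 := Fg_le_exp ht
    rw [Real.norm_eq_abs, abs_of_nonpos (by nlinarith)]
    nlinarith
  · simpa using mul_exp_tendsto_atBot.neg

noncomputable def Sfn (t : ℝ) : ℝ := 2 * t * Fg t + Real.exp (-t^2)

lemma hasDerivAt_gaussval (t : ℝ) :
    HasDerivAt (fun t : ℝ => Real.exp (-t^2)) (-2 * t * Real.exp (-t^2)) t := by
  have h : HasDerivAt (fun t : ℝ => -t^2) (-(2*t)) t := by
    simpa using (hasDerivAt_pow 2 t).fun_neg
  have := (h.exp)
  convert this using 1; ring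

lemma hasDerivAt_Sfn (t : ℝ) : HasDerivAt Sfn (2 * Fg t) t := by
  have h1 : HasDerivAt (fun t : ℝ => 2 * t * Fg t) (2 * Fg t + 2 * t * Real.exp (-t^2)) t := by
    have := ((hasDerivAt_id t).const_mul 2).mul (hasDerivAt_Fg t)
    refine this.congr_deriv ?_; simp
  have h2 := h1.add (hasDerivAt_gaussval t)
  have h3 : 2 * Fg t = 2 * Fg t + 2 * t * Real.exp (-t^2) + -2 * t * Real.exp (-t^2) := by ring
  rw [h3]; exact h2

lemma Sfn_pos (t : ℝ) : 0 < Sfn t := by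
  apply pos_of_strictMono_tendsto
  · exact strictMono_of_deriv_pos (fun t => by
      rw [(hasDerivAt_Sfn t).deriv]; have := Fg_pos t; linarith)
  · have h1 : Tendsto (fun t : ℝ => 2 * (t * Fg t)) atBot (nhds (2 * 0)) :=
      mul_Fg_tendsto_atBot.const_mul 2
    have := h1.add gaussval_tendsto_atBot
    simp only [mul_zero, add_zero] at this
    apply this.congr; intro t; unfold Sfn; ring

lemma one_add_sq_pos (t : ℝ) : (0:ℝ) < 1 + 2 * t^2 := by positivity

noncomputable def Rfn (t : ℝ) : ℝ := Fg t + t * Real.exp (-t^2) / (1 + 2 * t^2)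

lemma hasDerivAt_Rfn (t : ℝ) :
    HasDerivAt Rfn (2 * Real.exp (-t^2) / (1 + 2 * t^2)^2) t := by
  have hden : (1 + 2 * t^2) ≠ 0 := (one_add_sq_pos t).ne'
  have hnum := (hasDerivAt_id t).mul (hasDerivAt_gaussval t)
  have hden' : HasDerivAt (fun t : ℝ => 1 + 2 * t^2) (4 * t) t := by
    have := ((hasDerivAt_pow 2 t).const_mul 2).const_add 1
    refine this.congr_deriv ?_; simp; ring
  have hq := hnum.div hden' hden
  have := (hasDerivAt_Fg t).add hq
  refine this.congr_deriv ?_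
  simp only [id_eq, Pi.mul_apply]
  field_simp
  ring

lemma Rfn_tendsto_atBot : Tendsto Rfn atBot (nhds 0) := by
  have h2 : Tendsto (fun t : ℝ => t * Real.exp (-t^2) / (1 + 2 * t^2)) atBot (nhds 0) := by
    apply squeeze_zero_norm' (a := fun t : ℝ => Real.exp (-t^2))
    · filter_upwards with t
      have h1 := (one_add_sq_pos t)
      have hφ : 0 < Real.exp (-t^2) := Real.exp_pos _
      rw [Real.norm_eq_abs, abs_div, abs_of_pos h1, abs_mul, abs_of_pos hφ]
      rw [div_le_iff₀ h1]
      have habs : |t| ≤ 1 + 2 * t^2 := by nlinarith [sq_nonneg (2*|t| - 1), sq_abs t]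
      calc |t| * Real.exp (-t^2) ≤ (1 + 2*t^2) * Real.exp (-t^2) :=
            mul_le_mul_of_nonneg_right habs hφ.le
        _ = Real.exp (-t^2) * (1 + 2*t^2) := by ring
    · exact gaussval_tendsto_atBot
  have := Fg_tendsto_atBot.add h2
  rw [add_zero] at this; exact this

lemma Rfn_pos (t : ℝ) : 0 < Rfn t := by
  apply pos_of_strictMono_tendsto _ Rfn_tendsto_atBot
  apply strictMono_of_deriv_pos
  intro x
  rw [(hasDerivAt_Rfn x).deriv]
  positivity

noncomputable def Gfn (t : ℝ) : ℝ :=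
  Fg t^2 - t * Real.exp (-t^2) * Fg t - Real.exp (-t^2)^2 / 2

lemma hasDerivAt_Gfn (t : ℝ) :
    HasDerivAt Gfn (Real.exp (-t^2) * (1 + 2 * t^2) * Rfn t) t := by
  have h1 := (hasDerivAt_Fg t).pow 2
  have h2 := ((hasDerivAt_id t).mul (hasDerivAt_gaussval t)).mul (hasDerivAt_Fg t)
  have h3 := (hasDerivAt_gaussval t).pow 2
  have := (h1.sub h2).sub (h3.div_const 2)
  refine this.congr_deriv ?_
  unfold Rfn
  simp only [id_eq, Pi.mul_apply]
  have hden : (1 + 2 * t^2) ≠ 0 := (one_add_sq_pos t).ne'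
  field_simp
  ring

lemma Gfn_tendsto_atBot : Tendsto Gfn atBot (nhds 0) := by
  have h1 : Tendsto (fun t : ℝ => Fg t^2) atBot (nhds 0) := by
    have := Fg_tendsto_atBot.mul Fg_tendsto_atBot
    simpa [pow_two] using this
  have h2 : Tendsto (fun t : ℝ => t * Real.exp (-t^2) * Fg t) atBot (nhds 0) := by
    apply squeeze_zero_norm' (a := fun t : ℝ => -(t * Real.exp t))
    · filter_upwards [eventually_le_atBot (-1 : ℝ)] with t ht
      have hF := Fg_pos t
      have hFe := Fg_le_exp ht
      have hφ : Real.exp (-t^2) ≤ 1 := by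
        rw [← Real.exp_zero]; apply Real.exp_le_exp.2; nlinarith
      have hφ0 : 0 < Real.exp (-t^2) := Real.exp_pos _
      have ht0 : t < 0 := by linarith
      rw [Real.norm_eq_abs, abs_mul, abs_mul, abs_of_neg ht0, abs_of_pos hφ0, abs_of_pos hF]
      have he : 0 < Real.exp t := Real.exp_pos _
      have hkey : Real.exp (-t^2) * Fg t ≤ Real.exp t := le_trans (by nlinarith) hFe
      nlinarith
    · simpa using mul_exp_tendsto_atBot.neg
  have h3 : Tendsto (fun t : ℝ => Real.exp (-t^2)^2 / 2) atBot (nhds 0) := by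
    have := (gaussval_tendsto_atBot.mul gaussval_tendsto_atBot).div_const 2
    simpa [pow_two] using this
  have := (h1.sub h2).sub h3
  simp only [sub_zero] at this; exact this

lemma Gfn_pos (t : ℝ) : 0 < Gfn t := by
  apply pos_of_strictMono_tendsto _ Gfn_tendsto_atBot
  apply strictMono_of_deriv_pos
  intro x
  rw [(hasDerivAt_Gfn x).deriv]
  have := Rfn_pos x
  positivity


lemma sqrt_pi_pos : 0 < Real.sqrt Real.pi := Real.sqrt_pos.2 Real.pi_pos

lemma Fg_zero : Fg 0 = Real.sqrt Real.pi / 2 := by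
  have htot : ∫ s : ℝ, Real.exp (-s^2) = Real.sqrt Real.pi := by
    have := integral_gaussian 1
    simpa using this
  have hsplit : (∫ s in Set.Iic (0:ℝ), Real.exp (-s^2)) + ∫ s in Set.Ioi (0:ℝ), Real.exp (-s^2)
      = ∫ s : ℝ, Real.exp (-s^2) := by
    have := integral_add_compl (μ := volume) (measurableSet_Iic (a := (0:ℝ))) gauss_integrable
    simpa [compl_Iic] using this
  have hsym : (∫ s in Set.Ioi (0:ℝ), Real.exp (-s^2)) = ∫ s in Set.Iic (0:ℝ), Real.exp (-s^2) := by
    rw [← neg_zero, ← integral_comp_neg_Ioi]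
    simp
  unfold Fg
  rw [hsym] at hsplit
  rw [htot] at hsplit
  linarith

lemma one_add_erf (t : ℝ) : 1 + erf t = 2 / Real.sqrt Real.pi * Fg t := by
  unfold erf
  rw [Fg_eq t, Fg_zero]
  have h : Real.sqrt Real.pi ≠ 0 := sqrt_pi_pos.ne'
  field_simp

lemma one_add_erf_pos (t : ℝ) : 0 < 1 + erf t := by
  rw [one_add_erf]
  have := Fg_pos t
  have := sqrt_pi_pos
  positivity

noncomputable def yfn (t : ℝ) : ℝ := Real.exp (-t^2) / Fg t

lemma fErf'_eq (t : ℝ) : fErf' t = yfn t := by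
  unfold fErf' yfn
  rw [one_add_erf]
  have h : Real.sqrt Real.pi ≠ 0 := sqrt_pi_pos.ne'
  have := (Fg_pos t).ne'
  field_simp

lemma yfn_pos (t : ℝ) : 0 < yfn t := div_pos (Real.exp_pos _) (Fg_pos t)

lemma hasDerivAt_yfn (t : ℝ) :
    HasDerivAt yfn (-(yfn t) * (2 * t + yfn t)) t := by
  have h := (hasDerivAt_gaussval t).div (hasDerivAt_Fg t) (Fg_pos t).ne'
  apply h.congr_deriv
  unfold yfn
  have := (Fg_pos t).ne'
  field_simp
  ring

lemma yfn_deriv_neg (t : ℝ) : deriv yfn t < 0 := by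
  rw [(hasDerivAt_yfn t).deriv]
  have hS : 0 < 2 * t * Fg t + Real.exp (-t^2) := Sfn_pos t
  have hF := Fg_pos t
  have : 2 * t + yfn t = (2 * t * Fg t + Real.exp (-t^2)) / Fg t := by
    unfold yfn; field_simp
  rw [this]
  have hy := yfn_pos t
  have hq : 0 < (2 * t * Fg t + Real.exp (-t^2)) / Fg t := div_pos hS hF
  nlinarith

lemma yfn_strictAnti : StrictAnti yfn := strictAnti_of_deriv_neg yfn_deriv_neg

lemma yfn_gt (t : ℝ) : -2 * t < yfn t := by
  have hS : 0 < 2 * t * Fg t + Real.exp (-t^2) := Sfn_pos t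
  have hF := Fg_pos t
  rw [yfn, lt_div_iff₀ hF]
  nlinarith

lemma yfn_tendsto_atTop : Tendsto yfn atTop (nhds 0) := by
  apply squeeze_zero_norm' (a := fun t : ℝ => Real.exp (-t^2) / Fg 0)
  · filter_upwards [eventually_ge_atTop (0 : ℝ)] with t ht
    have hF0 := Fg_pos 0
    have hFt := Fg_pos t
    have hmono : Fg 0 ≤ Fg t := Fg_strictMono.monotone ht
    rw [Real.norm_eq_abs, abs_of_pos (yfn_pos t), yfn]
    apply div_le_div_of_nonneg_left (Real.exp_pos _).le hF0 hmono
  · simpa using gaussval_tendsto_atTop.div_const (Fg 0)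

lemma Dfn_pos (t : ℝ) : 0 < 1 - t * yfn t - (yfn t)^2 / 2 := by
  have hG : 0 < Fg t^2 - t * Real.exp (-t^2) * Fg t - Real.exp (-t^2)^2 / 2 := Gfn_pos t
  have hF := Fg_pos t
  have heq : 1 - t * yfn t - (yfn t)^2 / 2
      = (Fg t^2 - t * Real.exp (-t^2) * Fg t - Real.exp (-t^2)^2 / 2) / Fg t^2 := by
    unfold yfn; field_simp
  rw [heq]
  positivity

lemma exists_ycrit {κ : ℝ} (hκ : 0 < κ) : ∃ t : ℝ, yfn t = κ := by
  set a : ℝ := -(κ + 1) / 2 with ha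
  have hya : κ < yfn a := by
    have := yfn_gt a
    rw [ha] at this ⊢
    nlinarith [yfn_gt (-(κ+1)/2)]
  obtain ⟨b, hb, hyb⟩ : ∃ b : ℝ, a ≤ b ∧ yfn b < κ := by
    have := (yfn_tendsto_atTop.eventually_lt_const hκ)
    rcases (this.and (eventually_ge_atTop a)).exists with ⟨b, h1, h2⟩
    exact ⟨b, h2, h1⟩
  have hcont : ContinuousOn yfn (Set.Icc a b) := fun x _ =>
    ((hasDerivAt_yfn x).differentiableAt.continuousAt).continuousWithinAt
  have := intermediate_value_Icc' hb hcont
  have hκmem : κ ∈ Set.Icc (yfn b) (yfn a) := ⟨hyb.le, hya.le⟩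
  obtain ⟨t, _, ht⟩ := this hκmem
  exact ⟨t, ht⟩

lemma hasDerivAt_erf (t : ℝ) :
    HasDerivAt erf (2 / Real.sqrt Real.pi * Real.exp (-t^2)) t := by
  have h : HasDerivAt (fun u => ∫ x in (0:ℝ)..u, Real.exp (-x^2)) (Real.exp (-t^2)) t :=
    intervalIntegral.integral_hasDerivAt_right (gauss_integrable.intervalIntegrable)
      (gauss_cont.stronglyMeasurable.stronglyMeasurableAtFilter) gauss_cont.continuousAt
  exact h.const_mul _

lemma hasDerivAt_fErf (t : ℝ) : HasDerivAt fErf (yfn t) t := by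
  have h := ((hasDerivAt_erf t).const_add 1).log (one_add_erf_pos t).ne'
  rw [← fErf'_eq]
  exact h

lemma hasDerivAt_fErf' (t : ℝ) :
    HasDerivAt fErf' (-(yfn t) * (2 * t + yfn t)) t := by
  have : fErf' = yfn := funext fErf'_eq
  rw [this]
  exact hasDerivAt_yfn t

lemma hasDerivAt_E (ν g : ℝ) (hν : 0 < ν) (c : ℝ) :
    HasDerivAt (Eenergy ν g)
      ((1 - (c / Real.sqrt (2*ν)) * yfn (c / Real.sqrt (2*ν))
          - (yfn (c / Real.sqrt (2*ν)))^2 / 2)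
        * (g - Real.sqrt (ν/2) * yfn (c / Real.sqrt (2*ν)))) c := by
  set s := Real.sqrt (2*ν) with hs
  have hspos : 0 < s := Real.sqrt_pos.2 (by linarith)
  have hs2 : s^2 = 2*ν := Real.sq_sqrt (by linarith)
  have hp : Real.sqrt (ν/2) = s/2 := by
    rw [show ν/2 = (s/2)^2 by rw [div_pow, hs2]; ring]
    exact Real.sqrt_sq (by positivity)
  set u := c / s with hu
  have hT : HasDerivAt (fun c : ℝ => c / s) (1/s) c := by
    simpa using (hasDerivAt_id c).div_const s
  have h1 : HasDerivAt (fun c : ℝ => fErf (c / s)) (yfn u * (1/s)) c :=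
    HasDerivAt.comp (h₂ := fErf) c (hasDerivAt_fErf u) hT
  have h2 : HasDerivAt (fun c : ℝ => fErf' (c / s)) ((-(yfn u) * (2 * u + yfn u)) * (1/s)) c :=
    HasDerivAt.comp (h₂ := fErf') c (hasDerivAt_fErf' u) hT
  have hsq : HasDerivAt (fun c : ℝ => (fErf' (c / s))^2)
      ((2:ℕ) * (fErf' u)^1 * ((-(yfn u) * (2 * u + yfn u)) * (1/s))) c := h2.pow 2
  have hA := h1.add (hsq.const_mul (1/4 : ℝ))
  have hB := (h2.const_mul (Real.sqrt (ν/2))).add (hT.const_mul s)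
  have hE := ((hasDerivAt_const c (ν * Real.log (2 / Real.sqrt (2 * Real.pi * ν)))).sub
    (hA.const_mul ν)).add (hB.const_mul g)
  have hEeq : Eenergy ν g = fun c =>
      ν * Real.log (2 / Real.sqrt (2 * Real.pi * ν))
        - ν * (fErf (c / s) + (1/4) * (fErf' (c / s))^2)
        + g * (Real.sqrt (ν/2) * fErf' (c / s) + s * (c / s)) := rfl
  rw [hEeq]
  refine hE.congr_deriv ?_
  rw [fErf'_eq, hp]
  have hν4 : ν = s^2/2 := by rw [hs2]; ring
  rw [hν4]
  push_cast
  field_simp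
  ring

/-- for every `ν > 0` and `g > 0`, `E` has a unique critical point on `ℝ`,
and it is a global minimum of `E`. -/
theorem stmt_16 (ν g : ℝ) (hν : 0 < ν) (hg : 0 < g) :
    ∃ c : ℝ, deriv (Eenergy ν g) c = 0
      ∧ (∀ c' : ℝ, deriv (Eenergy ν g) c' = 0 → c' = c)
      ∧ (∀ c' : ℝ, Eenergy ν g c ≤ Eenergy ν g c') := by
  set s := Real.sqrt (2*ν) with hs
  have hspos : 0 < s := Real.sqrt_pos.2 (by linarith)
  have hppos : 0 < Real.sqrt (ν/2) := Real.sqrt_pos.2 (by linarith)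
  set κ := g / Real.sqrt (ν/2) with hκdef
  have hκ : 0 < κ := div_pos hg hppos
  obtain ⟨t₀, ht₀⟩ := exists_ycrit hκ
  refine ⟨s * t₀, ?_, ?_, ?_⟩
  · rw [(hasDerivAt_E ν g hν (s * t₀)).deriv]
    have : s * t₀ / s = t₀ := by field_simp
    rw [this, ht₀, hκdef]
    have : Real.sqrt (ν/2) * (g / Real.sqrt (ν/2)) = g := by field_simp
    rw [this]
    ring
  · intro c' hc'
    rw [(hasDerivAt_E ν g hν c').deriv] at hc'
    have hD := Dfn_pos (c' / s)
    rcases mul_eq_zero.1 hc' with h | h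
    · exact absurd h hD.ne'
    · have hy : yfn (c' / s) = κ := by
        rw [hκdef]
        have h0 : Real.sqrt (ν/2) * yfn (c' / s) = g := by linarith
        rw [← h0]
        field_simp
      have : c' / s = t₀ := yfn_strictAnti.injective (by rw [hy, ht₀])
      field_simp at this
      linarith
  · -- global minimum
    intro c'
    have hdiff : ∀ x : ℝ, DifferentiableAt ℝ (Eenergy ν g) x :=
      fun x => (hasDerivAt_E ν g hν x).differentiableAt
    have hderiv : ∀ x : ℝ, deriv (Eenergy ν g) x =
        (1 - (x / s) * yfn (x / s) - (yfn (x / s))^2 / 2)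
          * (g - Real.sqrt (ν/2) * yfn (x / s)) :=
      fun x => (hasDerivAt_E ν g hν x).deriv
    have hgκ : Real.sqrt (ν/2) * κ = g := by rw [hκdef]; field_simp
    rcases le_total c' (s * t₀) with hle | hle
    · -- E antitone on Iic (s*t₀)
      have hanti : AntitoneOn (Eenergy ν g) (Set.Iic (s * t₀)) := by
        apply antitoneOn_of_deriv_nonpos (convex_Iic _)
          (fun x _ => (hdiff x).continuousAt.continuousWithinAt)
          (fun x _ => ((hdiff x).differentiableWithinAt))
        intro x hx
        rw [interior_Iic, Set.mem_Iio] at hx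
        rw [hderiv x]
        have hxs : x / s < t₀ := by
          rw [div_lt_iff₀ hspos]; linarith [mul_comm s t₀]
        have hyy : κ < yfn (x / s) := by
          rw [← ht₀]; exact yfn_strictAnti hxs
        have hD := Dfn_pos (x / s)
        have : g - Real.sqrt (ν/2) * yfn (x / s) < 0 := by nlinarith
        nlinarith
      exact hanti (Set.mem_Iic.2 hle) Set.self_mem_Iic hle
    · have hmono : MonotoneOn (Eenergy ν g) (Set.Ici (s * t₀)) := by
        apply monotoneOn_of_deriv_nonneg (convex_Ici _)
          (fun x _ => (hdiff x).continuousAt.continuousWithinAt)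
          (fun x _ => ((hdiff x).differentiableWithinAt))
        intro x hx
        rw [interior_Ici, Set.mem_Ioi] at hx
        rw [hderiv x]
        have hxs : t₀ < x / s := by
          rw [lt_div_iff₀ hspos]; linarith [mul_comm s t₀]
        have hyy : yfn (x / s) < κ := by
          rw [← ht₀]; exact yfn_strictAnti hxs
        have hD := Dfn_pos (x / s)
        have : 0 < g - Real.sqrt (ν/2) * yfn (x / s) := by nlinarith
        nlinarith
      exact hmono Set.self_mem_Ici (Set.mem_Ici.2 hle) hle
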